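/- Assume K is nonnegative, K(u) = 0 whenever |u| > 1, x and all the points x₁,…,x_m lie in a compact interval I, and U₂(x)·U₀(x) − U₁(x)² > 0. Define the local linear estimator ĝ(x) = (U₂(x)V₀(x) − U₁(x)V₁(x)) / (U₂(x)U₀(x) − U₁(x)²) and Δ(x) = (U₂(x)Δ₀(x) − U₁(x)Δ₁(x)) / (U₂(x)U₀(x) − U₁(x)²). Then |ĝ(x) − ( g(x) + (1/2)·h²·g''(x)·(U₂(x)² − U₁(x)U₃(x))/(U₂(x)U₀(x) − U₁(x)²) + Δ(x) )| ≤ 2·Q·h²·U₀(x)² / (U₂(x)U₀(x) − U₁(x)²), where Q = sup { |g''(s) − g''(t)| : s, t ∈ I, |s − t| ≤ h }. -/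

import Mathlib

open intervalIntegral Finset

/-- Scaled kernel `K_h(u) = K(u/h)/h`. -/
noncomputable def kernScaled (K : ℝ → ℝ) (h u : ℝ) : ℝ := K (u / h) / h

/-- `U_ℓ(x) = m⁻¹ Σᵢ ((x - xᵢ)/h)^ℓ K_h(x - xᵢ)`. -/
noncomputable def Ustat (K : ℝ → ℝ) (h : ℝ) (m : ℕ) (X : Fin m → ℝ) (ℓ : ℕ) (x : ℝ) : ℝ :=
  (1 / (m : ℝ)) * ∑ i, ((x - X i) / h) ^ ℓ * kernScaled K h (x - X i)

/-- `V_ℓ(x) = m⁻¹ Σᵢ yᵢ ((x - xᵢ)/h)^ℓ K_h(x - xᵢ)`. -/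
noncomputable def Vstat (K : ℝ → ℝ) (h : ℝ) (m : ℕ) (X Y : Fin m → ℝ) (ℓ : ℕ) (x : ℝ) : ℝ :=
  (1 / (m : ℝ)) * ∑ i, Y i * (((x - X i) / h) ^ ℓ * kernScaled K h (x - X i))

/-- `Δ_ℓ(x) = (mh)⁻¹ Σᵢ εᵢ ((x - xᵢ)/h)^ℓ K((x - xᵢ)/h)`. -/
noncomputable def Dstat (K : ℝ → ℝ) (h : ℝ) (m : ℕ) (X ε : Fin m → ℝ) (ℓ : ℕ) (x : ℝ) : ℝ :=
  (1 / ((m : ℝ) * h)) * ∑ i, ε i * (((x - X i) / h) ^ ℓ * K ((x - X i) / h))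

/-- The local linear estimator `ĝ(x) = (U₂ V₀ - U₁ V₁)/(U₂ U₀ - U₁²)`. -/
noncomputable def locLin (K : ℝ → ℝ) (h : ℝ) (m : ℕ) (X Y : Fin m → ℝ) (x : ℝ) : ℝ :=
  (Ustat K h m X 2 x * Vstat K h m X Y 0 x - Ustat K h m X 1 x * Vstat K h m X Y 1 x) /
    (Ustat K h m X 2 x * Ustat K h m X 0 x - (Ustat K h m X 1 x) ^ 2)

/-- `Δ(x) = (U₂ Δ₀ - U₁ Δ₁)/(U₂ U₀ - U₁²)`. -/
noncomputable def DeltaStat (K : ℝ → ℝ) (h : ℝ) (m : ℕ) (X ε : Fin m → ℝ) (x : ℝ) : ℝ :=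
  (Ustat K h m X 2 x * Dstat K h m X ε 0 x - Ustat K h m X 1 x * Dstat K h m X ε 1 x) /
    (Ustat K h m X 2 x * Ustat K h m X 0 x - (Ustat K h m X 1 x) ^ 2)

/-- The modulus of continuity of `g''` at scale `h` over the interval `I`:
`Q = sup { |g''(s) - g''(t)| : s, t ∈ I, |s - t| ≤ h }`. -/
noncomputable def modCont (g : ℝ → ℝ) (I : Set ℝ) (h : ℝ) : ℝ :=
  sSup {q : ℝ | ∃ s ∈ I, ∃ t ∈ I, |s - t| ≤ h ∧ q = |deriv (deriv g) s - deriv (deriv g) t|}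

/-- Deterministic expansion of the local linear estimator: with `yᵢ = g(xᵢ) + εᵢ`,
a nonnegative kernel supported in `[-1,1]`, design points and `x` in a compact interval
`[a,b]`, and positive denominator `U₂U₀ - U₁² > 0`,
`|ĝ(x) - (g(x) + (1/2) h² g''(x) (U₂² - U₁U₃)/(U₂U₀ - U₁²) + Δ(x))|
   ≤ 2 Q h² U₀(x)² / (U₂U₀ - U₁²)`. -/
-- aux: U0 nonneg
lemma Ustat_zero_nonneg (K : ℝ → ℝ) (hKpos : ∀ u, 0 ≤ K u) (h : ℝ) (hh : 0 < h)
    (m : ℕ) (X : Fin m → ℝ) (x : ℝ) : 0 ≤ Ustat K h m X 0 x := by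
  unfold Ustat kernScaled
  apply mul_nonneg (by positivity)
  apply Finset.sum_nonneg
  intro i _
  simp only [pow_zero, one_mul]
  exact div_nonneg (hKpos _) hh.le

-- aux: |U_ℓ| ≤ U_0
lemma abs_Ustat_le (K : ℝ → ℝ) (hKpos : ∀ u, 0 ≤ K u) (hKsupp : ∀ u, 1 < |u| → K u = 0)
    (h : ℝ) (hh : 0 < h) (m : ℕ) (X : Fin m → ℝ) (ℓ : ℕ) (x : ℝ) :
    |Ustat K h m X ℓ x| ≤ Ustat K h m X 0 x := by
  unfold Ustat kernScaled
  rw [abs_mul, abs_of_nonneg (show (0:ℝ) ≤ 1/(m:ℝ) by positivity)]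
  apply mul_le_mul_of_nonneg_left _ (by positivity)
  refine (Finset.abs_sum_le_sum_abs _ _).trans (Finset.sum_le_sum ?_)
  intro i _
  simp only [pow_zero, one_mul]
  set u := (x - X i) / h with hu
  rcases le_or_gt |u| 1 with h1 | h1
  · have hK : 0 ≤ K u / h := div_nonneg (hKpos _) hh.le
    rw [abs_mul, abs_of_nonneg hK, abs_pow]
    have hp : |u| ^ ℓ ≤ 1 := pow_le_one₀ (abs_nonneg _) h1
    nlinarith
  · rw [hKsupp u h1]
    simp

lemma taylor_phi_bound (g : ℝ → ℝ) (hg : ContDiff ℝ 2 g) (a b x t hh Q : ℝ)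
    (hx : x ∈ Set.Icc a b) (ht : t ∈ Set.Icc a b) (hth : |t - x| ≤ hh) (hQ0 : 0 ≤ Q)
    (hQ : ∀ s ∈ Set.Icc a b, |s - x| ≤ hh →
      |deriv (deriv g) s - deriv (deriv g) x| ≤ Q) :
    |g t - g x - deriv g x * (t - x) - (deriv (deriv g) x / 2) * (t - x) ^ 2|
      ≤ Q * (t - x) ^ 2 := by
  have hg' : Differentiable ℝ g ∧ ContDiff ℝ 1 (deriv g) := by
    rw [show (2 : WithTop ℕ∞) = (1 : WithTop ℕ∞) + 1 by norm_num, contDiff_succ_iff_deriv] at hg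
    exact ⟨hg.1, hg.2.2⟩
  have hg1 : Differentiable ℝ g := hg'.1
  have hg2 : Differentiable ℝ (deriv g) := hg'.2.differentiable one_ne_zero
  set c := deriv (deriv g) x with hc
  set φ : ℝ → ℝ := fun s => g s - g x - deriv g x * (s - x) - (c / 2) * (s - x) ^ 2 with hφ
  set φ' : ℝ → ℝ := fun s => deriv g s - deriv g x - c * (s - x) with hφ'
  have hdφ : ∀ s, HasDerivAt φ (φ' s) s := by
    intro s
    have h1 : HasDerivAt (fun s : ℝ => g s) (deriv g s) s := (hg1 s).hasDerivAt
    have h2 : HasDerivAt (fun s : ℝ => deriv g x * (s - x)) (deriv g x) s := by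
      simpa using ((hasDerivAt_id s).sub_const x).const_mul (deriv g x)
    have h3 : HasDerivAt (fun s : ℝ => (c / 2) * (s - x) ^ 2) (c * (s - x)) s := by
      have := (((hasDerivAt_id s).sub_const x).pow 2).const_mul (c / 2)
      refine this.congr_deriv ?_
      simp only [id]
      ring
    exact ((h1.sub_const (g x)).sub h2).sub h3
  have hdφ' : ∀ s, HasDerivAt φ' (deriv (deriv g) s - c) s := by
    intro s
    have h1 : HasDerivAt (fun s : ℝ => deriv g s) (deriv (deriv g) s) s := (hg2 s).hasDerivAt
    have h2 : HasDerivAt (fun s : ℝ => c * (s - x)) c s := by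
      simpa using ((hasDerivAt_id s).sub_const x).const_mul c
    exact (h1.sub_const (deriv g x)).sub h2
  set s : Set ℝ := Set.uIcc x t with hs
  have hmem : ∀ y ∈ s, y ∈ Set.Icc a b ∧ |y - x| ≤ |t - x| := by
    intro y hy
    rcases le_total x t with hle | hle
    · rw [hs, Set.uIcc_of_le hle] at hy
      obtain ⟨h1, h2⟩ := hy
      refine ⟨⟨hx.1.trans h1, h2.trans ht.2⟩, ?_⟩
      rw [abs_of_nonneg (by linarith), abs_of_nonneg (by linarith)]
      linarith
    · rw [hs, Set.uIcc_of_ge hle] at hy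
      obtain ⟨h1, h2⟩ := hy
      refine ⟨⟨ht.1.trans h1, h2.trans hx.2⟩, ?_⟩
      rw [abs_of_nonpos (by linarith), abs_of_nonpos (by linarith)]
      linarith
  have hconv : Convex ℝ s := convex_uIcc x t
  have hxs : x ∈ s := Set.left_mem_uIcc
  have hts : t ∈ s := Set.right_mem_uIcc
  have step1 : ∀ y ∈ s, ‖φ' y‖ ≤ Q * |t - x| := by
    intro y hy
    have := Convex.norm_image_sub_le_of_norm_hasDerivWithin_le
      (f := φ') (f' := fun s => deriv (deriv g) s - c) (s := s)
      (fun z _ => (hdφ' z).hasDerivWithinAt)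
      (fun z hz => by
        have hm := hmem z hz
        simpa [Real.norm_eq_abs] using hQ z hm.1 (hm.2.trans hth)) hconv hxs hy
    have hφ'x : φ' x = 0 := by simp [φ']
    rw [hφ'x, sub_zero, Real.norm_eq_abs] at this
    calc ‖φ' y‖ ≤ Q * |y - x| := by simpa [Real.norm_eq_abs] using this
      _ ≤ Q * |t - x| := mul_le_mul_of_nonneg_left (hmem y hy).2 hQ0
  have step2 := Convex.norm_image_sub_le_of_norm_hasDerivWithin_le
      (f := φ) (f' := φ') (s := s)
      (fun z _ => (hdφ z).hasDerivWithinAt) step1 hconv hxs hts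
  have hφx : φ x = 0 := by simp [φ]
  rw [hφx, sub_zero, Real.norm_eq_abs, Real.norm_eq_abs] at step2
  calc |g t - g x - deriv g x * (t - x) - (deriv (deriv g) x / 2) * (t - x) ^ 2|
      = |φ t| := rfl
    _ ≤ Q * |t - x| * |t - x| := step2
    _ = Q * (t - x) ^ 2 := by
        rw [mul_assoc, ← abs_mul, ← sq, abs_of_nonneg (sq_nonneg _)]

-- decomposition of V_ℓ
lemma Vstat_decomp (K : ℝ → ℝ) (h : ℝ) (hh : 0 < h) (m : ℕ) (hm : (m:ℝ) ≠ 0)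
    (X Y ε : Fin m → ℝ) (g : ℝ → ℝ) (hY : ∀ i, Y i = g (X i) + ε i) (x : ℝ) (ℓ : ℕ) :
    Vstat K h m X Y ℓ x
      = g x * Ustat K h m X ℓ x - deriv g x * h * Ustat K h m X (ℓ+1) x
        + (deriv (deriv g) x / 2) * h ^ 2 * Ustat K h m X (ℓ+2) x
        + (1 / (m:ℝ)) * ∑ i, (g (X i) - g x - deriv g x * (X i - x)
            - (deriv (deriv g) x / 2) * (X i - x) ^ 2)
            * (((x - X i) / h) ^ ℓ * kernScaled K h (x - X i))
        + Dstat K h m X ε ℓ x := by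
  have hh' : h ≠ 0 := ne_of_gt hh
  unfold Vstat Ustat Dstat kernScaled
  have hterm : ∀ i : Fin m,
      Y i * (((x - X i) / h) ^ ℓ * (K ((x - X i) / h) / h))
        = g x * (((x - X i) / h) ^ ℓ * (K ((x - X i) / h) / h))
          - deriv g x * h * (((x - X i) / h) ^ (ℓ+1) * (K ((x - X i) / h) / h))
          + (deriv (deriv g) x / 2) * h ^ 2 * (((x - X i) / h) ^ (ℓ+2) * (K ((x - X i) / h) / h))
          + (g (X i) - g x - deriv g x * (X i - x)
              - (deriv (deriv g) x / 2) * (X i - x) ^ 2)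
              * (((x - X i) / h) ^ ℓ * (K ((x - X i) / h) / h))
          + ε i * (((x - X i) / h) ^ ℓ * K ((x - X i) / h)) / h := by
    intro i
    rw [hY i, pow_add, pow_add]
    generalize K ((x - X i) / h) = k
    generalize ((x - X i) / h) ^ ℓ = p
    field_simp
    ring
  rw [Finset.sum_congr rfl (fun i _ => hterm i)]
  simp only [Finset.sum_add_distrib, Finset.sum_sub_distrib, ← Finset.mul_sum,
    ← Finset.sum_div]
  field_simp

theorem locLin_expansion
    (K : ℝ → ℝ) (hKpos : ∀ u, 0 ≤ K u) (hKsupp : ∀ u, 1 < |u| → K u = 0)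
    (h : ℝ) (hh : 0 < h) (m : ℕ) (X Y ε : Fin m → ℝ)
    (g : ℝ → ℝ) (hg : ContDiff ℝ 2 g)
    (hY : ∀ i, Y i = g (X i) + ε i)
    (a b : ℝ) (hab : a ≤ b) (x : ℝ) (hx : x ∈ Set.Icc a b)
    (hX : ∀ i, X i ∈ Set.Icc a b)
    (hden : 0 < Ustat K h m X 2 x * Ustat K h m X 0 x - (Ustat K h m X 1 x) ^ 2) :
    |locLin K h m X Y x
        - (g x
            + (1 / 2) * h ^ 2 * deriv (deriv g) x *
              ((Ustat K h m X 2 x ^ 2 - Ustat K h m X 1 x * Ustat K h m X 3 x) /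
                (Ustat K h m X 2 x * Ustat K h m X 0 x - (Ustat K h m X 1 x) ^ 2))
            + DeltaStat K h m X ε x)|
      ≤ 2 * modCont g (Set.Icc a b) h * h ^ 2 * (Ustat K h m X 0 x) ^ 2 /
          (Ustat K h m X 2 x * Ustat K h m X 0 x - (Ustat K h m X 1 x) ^ 2) := by
  have hm : (m : ℝ) ≠ 0 := by
    rcases Nat.eq_zero_or_pos m with h0 | h0
    · subst h0; simp [Ustat] at hden
    · exact Nat.cast_ne_zero.mpr h0.ne'
  -- properties of Q
  have hgcont2 : Continuous (deriv (deriv g)) := by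
    have h1 : ContDiff ℝ 1 (deriv g) := by
      rw [show (2 : WithTop ℕ∞) = (1 : WithTop ℕ∞) + 1 by norm_num,
        contDiff_succ_iff_deriv] at hg
      exact hg.2.2
    exact h1.continuous_deriv le_rfl
  obtain ⟨M, hM⟩ := (isCompact_Icc (a := a) (b := b)).exists_bound_of_continuousOn
    hgcont2.continuousOn
  have hBdd : BddAbove {q : ℝ | ∃ s ∈ Set.Icc a b, ∃ t ∈ Set.Icc a b,
      |s - t| ≤ h ∧ q = |deriv (deriv g) s - deriv (deriv g) t|} := by
    refine ⟨M + M, ?_⟩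
    rintro q ⟨s, hs, t, ht, -, rfl⟩
    have h1 := hM s hs
    have h2 := hM t ht
    rw [Real.norm_eq_abs] at h1 h2
    calc |deriv (deriv g) s - deriv (deriv g) t|
        ≤ |deriv (deriv g) s| + |deriv (deriv g) t| := abs_sub _ _
      _ ≤ M + M := add_le_add h1 h2
  set Q := modCont g (Set.Icc a b) h with hQdef
  have hQS : Q = sSup {q : ℝ | ∃ s ∈ Set.Icc a b, ∃ t ∈ Set.Icc a b,
      |s - t| ≤ h ∧ q = |deriv (deriv g) s - deriv (deriv g) t|} := rfl
  have hQ0 : 0 ≤ Q := by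
    rw [hQS]
    exact le_csSup hBdd ⟨x, hx, x, hx, by simp [hh.le], by simp⟩
  have hQb : ∀ s ∈ Set.Icc a b, |s - x| ≤ h →
      |deriv (deriv g) s - deriv (deriv g) x| ≤ Q := by
    intro s hs hsx
    rw [hQS]
    exact le_csSup hBdd ⟨s, hs, x, hx, hsx, rfl⟩
  have hU0 := Ustat_zero_nonneg K hKpos h hh m X x
  -- the remainder sums
  set E0 := (1 / (m : ℝ)) * ∑ i, (g (X i) - g x - deriv g x * (X i - x)
      - (deriv (deriv g) x / 2) * (X i - x) ^ 2)
      * (((x - X i) / h) ^ 0 * kernScaled K h (x - X i)) with hE0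
  set E1 := (1 / (m : ℝ)) * ∑ i, (g (X i) - g x - deriv g x * (X i - x)
      - (deriv (deriv g) x / 2) * (X i - x) ^ 2)
      * (((x - X i) / h) ^ 1 * kernScaled K h (x - X i)) with hE1
  -- bound on the remainder sums
  have hEb : ∀ ℓ : ℕ, |(1 / (m : ℝ)) * ∑ i, (g (X i) - g x - deriv g x * (X i - x)
      - (deriv (deriv g) x / 2) * (X i - x) ^ 2)
      * (((x - X i) / h) ^ ℓ * kernScaled K h (x - X i))|
      ≤ Q * h ^ 2 * Ustat K h m X 0 x := by
    intro ℓ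
    have hterm : ∀ i : Fin m,
        |(g (X i) - g x - deriv g x * (X i - x)
          - (deriv (deriv g) x / 2) * (X i - x) ^ 2)
          * (((x - X i) / h) ^ ℓ * kernScaled K h (x - X i))|
        ≤ Q * h ^ 2 * (((x - X i) / h) ^ 0 * kernScaled K h (x - X i)) := by
      intro i
      simp only [pow_zero, one_mul]
      have hK : 0 ≤ kernScaled K h (x - X i) := div_nonneg (hKpos _) hh.le
      rcases le_or_gt |(x - X i) / h| 1 with h1 | h1
      · have hxi : |X i - x| ≤ h := by
          have heq : X i - x = -(h * ((x - X i) / h)) := by field_simp; ring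
          rw [heq, abs_neg, abs_mul, abs_of_pos hh]
          nlinarith [abs_nonneg ((x - X i) / h)]
        have hphi := taylor_phi_bound g hg a b x (X i) h Q hx (hX i) hxi hQ0 hQb
        have hsq : (X i - x) ^ 2 ≤ h ^ 2 := by
          nlinarith [sq_abs (X i - x), abs_nonneg (X i - x)]
        have hphi2 : |g (X i) - g x - deriv g x * (X i - x)
            - (deriv (deriv g) x / 2) * (X i - x) ^ 2| ≤ Q * h ^ 2 := by
          calc _ ≤ Q * (X i - x) ^ 2 := hphi
            _ ≤ Q * h ^ 2 := mul_le_mul_of_nonneg_left hsq hQ0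
        have h2 : |((x - X i) / h) ^ ℓ * kernScaled K h (x - X i)|
            ≤ kernScaled K h (x - X i) := by
          rw [abs_mul, abs_of_nonneg hK, abs_pow]
          nlinarith [pow_le_one₀ (n := ℓ) (abs_nonneg ((x - X i) / h)) h1]
        rw [abs_mul]
        exact mul_le_mul hphi2 h2 (abs_nonneg _) (by positivity)
      · have hK0 : kernScaled K h (x - X i) = 0 := by
          unfold kernScaled
          rw [hKsupp _ h1]
          simp
        rw [hK0]
        simp
    calc |(1 / (m : ℝ)) * ∑ i, (g (X i) - g x - deriv g x * (X i - x)
          - (deriv (deriv g) x / 2) * (X i - x) ^ 2)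
          * (((x - X i) / h) ^ ℓ * kernScaled K h (x - X i))|
        = (1 / (m : ℝ)) * |∑ i, (g (X i) - g x - deriv g x * (X i - x)
          - (deriv (deriv g) x / 2) * (X i - x) ^ 2)
          * (((x - X i) / h) ^ ℓ * kernScaled K h (x - X i))| := by
          rw [abs_mul, abs_of_nonneg (show (0:ℝ) ≤ 1 / (m:ℝ) by positivity)]
      _ ≤ (1 / (m : ℝ)) * ∑ i, Q * h ^ 2
          * (((x - X i) / h) ^ 0 * kernScaled K h (x - X i)) := by
          apply mul_le_mul_of_nonneg_left _ (by positivity)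
          exact (Finset.abs_sum_le_sum_abs _ _).trans (Finset.sum_le_sum fun i _ => hterm i)
      _ = Q * h ^ 2 * Ustat K h m X 0 x := by
          unfold Ustat
          rw [← Finset.mul_sum]
          ring
  have hE0b : |E0| ≤ Q * h ^ 2 * Ustat K h m X 0 x := hE0 ▸ hEb 0
  have hE1b : |E1| ≤ Q * h ^ 2 * Ustat K h m X 0 x := hE1 ▸ hEb 1
  -- decompositions
  have hd0 := Vstat_decomp K h hh m hm X Y ε g hY x 0
  have hd1 := Vstat_decomp K h hh m hm X Y ε g hY x 1
  rw [← hE0] at hd0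
  rw [← hE1] at hd1
  have hDne : Ustat K h m X 2 x * Ustat K h m X 0 x - (Ustat K h m X 1 x) ^ 2 ≠ 0 :=
    ne_of_gt hden
  have hkey : locLin K h m X Y x
      - (g x
          + (1 / 2) * h ^ 2 * deriv (deriv g) x *
            ((Ustat K h m X 2 x ^ 2 - Ustat K h m X 1 x * Ustat K h m X 3 x) /
              (Ustat K h m X 2 x * Ustat K h m X 0 x - (Ustat K h m X 1 x) ^ 2))
          + DeltaStat K h m X ε x)
      = (Ustat K h m X 2 x * E0 - Ustat K h m X 1 x * E1) /
          (Ustat K h m X 2 x * Ustat K h m X 0 x - (Ustat K h m X 1 x) ^ 2) := by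
    unfold locLin DeltaStat
    rw [hd0, hd1]
    field_simp
    ring
  rw [hkey, abs_div, abs_of_pos hden]
  rw [div_le_div_iff_of_pos_right hden]
  have h2le := abs_Ustat_le K hKpos hKsupp h hh m X 2 x
  have h1le := abs_Ustat_le K hKpos hKsupp h hh m X 1 x
  calc |Ustat K h m X 2 x * E0 - Ustat K h m X 1 x * E1|
      ≤ |Ustat K h m X 2 x * E0| + |Ustat K h m X 1 x * E1| := abs_sub _ _
    _ = |Ustat K h m X 2 x| * |E0| + |Ustat K h m X 1 x| * |E1| := by
        rw [abs_mul (Ustat K h m X 2 x) E0, abs_mul (Ustat K h m X 1 x) E1]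
    _ ≤ Ustat K h m X 0 x * (Q * h ^ 2 * Ustat K h m X 0 x)
        + Ustat K h m X 0 x * (Q * h ^ 2 * Ustat K h m X 0 x) :=
        add_le_add (mul_le_mul h2le hE0b (abs_nonneg _) hU0)
          (mul_le_mul h1le hE1b (abs_nonneg _) hU0)
    _ = 2 * Q * h ^ 2 * (Ustat K h m X 0 x) ^ 2 := by ring
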